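/- Let r ≥ 2 be an integer, α ≥ 2r^3 a real number, and n ≥ 1 an integer with r^3/(αn) < ln 2. Then ((αn)^{1/r} + r^2/(αn)^{(r-1)/r})^r ≤ α(n+1). -/

import Mathlib

lemma exp_le_one_add_two_mul {y : ℝ} (hy0 : 0 ≤ y) (hy : y < Real.log 2) :
    Real.exp y ≤ 1 + 2 * y := by
  have hl2 : (0:ℝ) < Real.log 2 := Real.log_pos (by norm_num)
  have hb := rpow_one_add_le_one_add_mul_self (s := (1:ℝ)) (by norm_num)
    (p := y / Real.log 2) (div_nonneg hy0 hl2.le)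
    ((div_le_one hl2).2 hy.le)
  have he : ((1:ℝ) + 1) ^ (y / Real.log 2) = Real.exp y := by
    rw [show (1:ℝ)+1 = 2 by norm_num, Real.rpow_def_of_pos (by norm_num),
      mul_div_cancel₀ _ hl2.ne']
  rw [he, mul_one] at hb
  refine hb.trans ?_
  have h2 : (1:ℝ)/2 < Real.log 2 := by
    have := Real.log_two_gt_d9; linarith
  have : y / Real.log 2 ≤ 2 * y := by
    rw [div_le_iff₀ hl2]; nlinarith
  linarith

/-- for an integer `r ≥ 2`, a real `α ≥ 2r³` and an integer `n ≥ 1`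
with `r³/(αn) < ln 2`, one has `((αn)^{1/r} + r²/(αn)^{(r-1)/r})^r ≤ α(n+1)`. -/
theorem stmt11 (r : ℕ) (hr : 2 ≤ r) (α : ℝ) (hα : 2 * (r : ℝ) ^ 3 ≤ α)
    (n : ℕ) (hn : 1 ≤ n) (h : (r : ℝ) ^ 3 / (α * n) < Real.log 2) :
    ((α * n) ^ ((1 : ℝ) / r) + (r : ℝ) ^ 2 / (α * n) ^ (((r : ℝ) - 1) / r)) ^ (r : ℕ)
      ≤ α * (n + 1) := by
  have hrR : (2:ℝ) ≤ (r:ℝ) := by exact_mod_cast hr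
  have hr0 : (0:ℝ) < r := by linarith
  have hr8 : (8:ℝ) ≤ (r:ℝ)^3 := by
    calc (8:ℝ) = 2^3 := by norm_num
      _ ≤ (r:ℝ)^3 := pow_le_pow_left₀ (by norm_num) hrR 3
  have hα0 : (0:ℝ) < α := by linarith
  have hn0 : (0:ℝ) < n := by exact_mod_cast hn
  set A : ℝ := α * n with hA
  have hA0 : 0 < A := mul_pos hα0 hn0
  -- rewrite the base
  have hbase : A ^ ((1:ℝ)/r) + (r:ℝ)^2 / A ^ (((r:ℝ)-1)/r)
      = A ^ ((1:ℝ)/r) * (1 + (r:ℝ)^2 / A) := by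
    have hsplit : A ^ (((r:ℝ)-1)/r) * A ^ ((1:ℝ)/r) = A := by
      rw [← Real.rpow_add hA0]
      rw [← add_div, sub_add_cancel, div_self hr0.ne', Real.rpow_one]
    have h1 : A ^ (((r:ℝ)-1)/r) ≠ 0 := (Real.rpow_pos_of_pos hA0 _).ne'
    field_simp
    linear_combination (-(r:ℝ)^2) * hsplit
  rw [hbase]
  have h1x : 0 ≤ 1 + (r:ℝ)^2 / A := by positivity
  rw [mul_pow]
  have hpow1 : (A ^ ((1:ℝ)/r)) ^ (r:ℕ) = A := by
    rw [← Real.rpow_natCast (A ^ ((1:ℝ)/r)) r, ← Real.rpow_mul hA0.le,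
      one_div_mul_cancel hr0.ne', Real.rpow_one]
  rw [hpow1]
  -- bound (1 + r²/A)^r ≤ exp(r³/A)
  have hstep1 : (1 + (r:ℝ)^2 / A) ^ (r:ℕ) ≤ Real.exp ((r:ℝ)^3 / A) := by
    have hb : 1 + (r:ℝ)^2 / A ≤ Real.exp ((r:ℝ)^2 / A) := by
      have := Real.add_one_le_exp ((r:ℝ)^2 / A); linarith
    calc (1 + (r:ℝ)^2 / A) ^ (r:ℕ) ≤ (Real.exp ((r:ℝ)^2 / A)) ^ (r:ℕ) :=
          pow_le_pow_left₀ h1x hb r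
      _ = Real.exp ((r:ℝ)^3 / A) := by
          rw [← Real.exp_nat_mul]
          congr 1
          ring
  have hy0 : 0 ≤ (r:ℝ)^3 / A := by positivity
  have hstep2 : Real.exp ((r:ℝ)^3 / A) ≤ 1 + 2 * ((r:ℝ)^3 / A) :=
    exp_le_one_add_two_mul hy0 h
  have : A * (1 + (r:ℝ)^2 / A) ^ (r:ℕ) ≤ A * (1 + 2 * ((r:ℝ)^3 / A)) := by
    apply mul_le_mul_of_nonneg_left (hstep1.trans hstep2) hA0.le
  refine this.trans ?_
  have : A * (1 + 2 * ((r:ℝ)^3 / A)) = A + 2 * (r:ℝ)^3 := by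
    field_simp
  rw [this, hA]
  nlinarith
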